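/- Let G be a group, u ≥ 1, and for g_1,…,g_u ∈ G write [g_1,…,g_u] for the 2u-tuple (g_1,…,g_u, g_u^{-1}, g_{u−1}^{-1},…, g_1^{-1}). Then for every permutation π of {1,…,u}, the tuple [g_1,…,g_u] is braid equivalent to [g_{π(1)},…,g_{π(u)}]. -/

import Mathlib

/-- Elementary braid move: replace adjacent entries `(a, b)` by `(a * b * a⁻¹, a)`. -/
def BraidMove {G : Type*} [Group G] (x y : List G) : Prop :=
  ∃ (l₁ l₂ : List G) (a b : G),
    x = l₁ ++ a :: b :: l₂ ∧ y = l₁ ++ (a * b * a⁻¹) :: a :: l₂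

/-- Braid equivalence: the equivalence relation generated by elementary braid moves. -/
def BraidEquiv {G : Type*} [Group G] : List G → List G → Prop :=
  Relation.EqvGen BraidMove

/-- The bracket tuple `[g_1, …, g_u] = (g_1, …, g_u, g_u⁻¹, …, g_1⁻¹)`. -/
def hmBracket {G : Type*} [Group G] (l : List G) : List G :=
  l ++ l.reverse.map (fun x => x⁻¹)

section Aux

variable {G : Type*} [Group G]

lemma braidEquiv_refl (x : List G) : BraidEquiv x x := Relation.EqvGen.refl x

lemma braidEquiv_symm {x y : List G} (h : BraidEquiv x y) : BraidEquiv y x :=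
  Relation.EqvGen.symm _ _ h

lemma braidEquiv_trans {x y z : List G} (h : BraidEquiv x y) (h' : BraidEquiv y z) :
    BraidEquiv x z := Relation.EqvGen.trans _ _ _ h h'

lemma braidMove_append {x y : List G} (h : BraidMove x y) (p s : List G) :
    BraidMove (p ++ x ++ s) (p ++ y ++ s) := by
  obtain ⟨l₁, l₂, a, b, hx, hy⟩ := h
  exact ⟨p ++ l₁, l₂ ++ s, a, b, by simp [hx], by simp [hy]⟩

lemma braidEquiv_append {x y : List G} (h : BraidEquiv x y) (p s : List G) :
    BraidEquiv (p ++ x ++ s) (p ++ y ++ s) := by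
  induction h with
  | rel a b hab => exact Relation.EqvGen.rel _ _ (braidMove_append hab p s)
  | refl a => exact Relation.EqvGen.refl _
  | symm a b _ ih => exact braidEquiv_symm ih
  | trans a b c _ _ ih₁ ih₂ => exact braidEquiv_trans ih₁ ih₂

lemma braidEquiv_cons {x y : List G} (h : BraidEquiv x y) (a : G) :
    BraidEquiv (a :: x) (a :: y) := by
  have := braidEquiv_append h [a] []
  simpa using this

/-- Single forward move. -/
lemma braidMove_single (l₁ l₂ : List G) (a b : G) :
    BraidEquiv (l₁ ++ a :: b :: l₂) (l₁ ++ (a * b * a⁻¹) :: a :: l₂) :=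
  Relation.EqvGen.rel _ _ ⟨l₁, l₂, a, b, rfl, rfl⟩

/-- Single inverse move: `(a, b) ↦ (b, b⁻¹ * a * b)`. -/
lemma braidMove_single' (l₁ l₂ : List G) (a b : G) :
    BraidEquiv (l₁ ++ a :: b :: l₂) (l₁ ++ b :: (b⁻¹ * a * b) :: l₂) := by
  have := braidEquiv_symm (braidMove_single l₁ l₂ b (b⁻¹ * a * b))
  have e : b * (b⁻¹ * a * b) * b⁻¹ = a := by group
  rwa [e] at this

/-- Push an element from the front through a list, conjugating it by the product. -/
lemma braid_push (m : List G) : ∀ (c : G) (s : List G),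
    BraidEquiv (c :: (m ++ s)) (m ++ (m.prod⁻¹ * c * m.prod) :: s) := by
  induction m with
  | nil => intro c s; simp [braidEquiv_refl]
  | cons x m ih =>
    intro c s
    have h1 : BraidEquiv (c :: x :: (m ++ s)) (x :: (x⁻¹ * c * x) :: (m ++ s)) :=
      braidMove_single' [] (m ++ s) c x
    have h2 : BraidEquiv (x :: ((x⁻¹ * c * x) :: (m ++ s)))
        (x :: (m ++ (m.prod⁻¹ * (x⁻¹ * c * x) * m.prod) :: s)) :=
      braidEquiv_cons (ih (x⁻¹ * c * x) s) x
    have e : m.prod⁻¹ * (x⁻¹ * c * x) * m.prod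
        = (x * m.prod)⁻¹ * c * (x * m.prod) := by group
    have := braidEquiv_trans h1 h2
    rw [e] at this
    simpa [List.prod_cons] using this

lemma braid_push_one {m : List G} (hm : m.prod = 1) (c : G) (s : List G) :
    BraidEquiv (c :: (m ++ s)) (m ++ c :: s) := by
  have := braid_push m c s
  rwa [hm, inv_one, one_mul, mul_one] at this

lemma hmBracket_prod (l : List G) : (hmBracket l).prod = 1 := by
  have h : (l.reverse.map (fun x => x⁻¹)).prod = l.prod⁻¹ := by
    rw [List.map_reverse, ← List.prod_inv_reverse]
  rw [hmBracket, List.prod_append, h, mul_inv_cancel]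

lemma hmBracket_cons (a : G) (l : List G) :
    hmBracket (a :: l) = a :: (hmBracket l ++ [a⁻¹]) := by
  simp [hmBracket]

/-- Swap the first two entries of a bracket tuple. -/
lemma hmBracket_swap (a b : G) (l : List G) :
    BraidEquiv (hmBracket (a :: b :: l)) (hmBracket (b :: a :: l)) := by
  set m := hmBracket l with hm
  have hmp : m.prod = 1 := hmBracket_prod l
  have hab : hmBracket (a :: b :: l) = a :: b :: (m ++ [b⁻¹, a⁻¹]) := by
    simp [hmBracket, hm]
  have hba : hmBracket (b :: a :: l) = b :: a :: (m ++ [a⁻¹, b⁻¹]) := by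
    simp [hmBracket, hm]
  rw [hab, hba]
  set a' := b⁻¹ * a * b with ha'
  -- step A: (a, b, …) → (b, a', …)
  have s1 : BraidEquiv (a :: b :: (m ++ [b⁻¹, a⁻¹])) (b :: a' :: (m ++ [b⁻¹, a⁻¹])) :=
    braidMove_single' [] (m ++ [b⁻¹, a⁻¹]) a b
  -- step B: (…, b⁻¹, a⁻¹) → (…, a'⁻¹, b⁻¹)
  have s2 : BraidEquiv (b :: a' :: (m ++ [b⁻¹, a⁻¹])) (b :: a' :: (m ++ [a'⁻¹, b⁻¹])) := by
    have := braidMove_single (b :: a' :: m) [] b⁻¹ a⁻¹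
    have e : b⁻¹ * a⁻¹ * b⁻¹⁻¹ = a'⁻¹ := by rw [ha']; group
    rw [e] at this
    simpa using this
  -- step C: push a' through m
  have s3 : BraidEquiv (b :: a' :: (m ++ [a'⁻¹, b⁻¹])) (b :: (m ++ [a', a'⁻¹, b⁻¹])) :=
    braidEquiv_cons (braid_push_one hmp a' [a'⁻¹, b⁻¹]) b
  -- step D: push b through m
  have s4 : BraidEquiv (b :: (m ++ [a', a'⁻¹, b⁻¹])) (m ++ [b, a', a'⁻¹, b⁻¹]) :=
    braid_push_one hmp b [a', a'⁻¹, b⁻¹]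
  -- step E: (b, a') → (a, b)
  have s5 : BraidEquiv (m ++ [b, a', a'⁻¹, b⁻¹]) (m ++ [a, b, a'⁻¹, b⁻¹]) := by
    have := braidMove_single m [a'⁻¹, b⁻¹] b a'
    have e : b * a' * b⁻¹ = a := by rw [ha']; group
    rwa [e] at this
  -- step F: (b, a'⁻¹) → (a⁻¹, b)
  have s6 : BraidEquiv (m ++ [a, b, a'⁻¹, b⁻¹]) (m ++ [a, a⁻¹, b, b⁻¹]) := by
    have := braidMove_single (m ++ [a]) [b⁻¹] b a'⁻¹
    have e : b * a'⁻¹ * b⁻¹ = a⁻¹ := by rw [ha']; group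
    rw [e] at this
    simpa using this
  -- step G: (a⁻¹, b) → (a⁻¹ * b * a, a⁻¹)
  have s7 : BraidEquiv (m ++ [a, a⁻¹, b, b⁻¹]) (m ++ [a, a⁻¹ * b * a, a⁻¹, b⁻¹]) := by
    have := braidMove_single (m ++ [a]) [b⁻¹] a⁻¹ b
    have e : a⁻¹ * b * a⁻¹⁻¹ = a⁻¹ * b * a := by group
    rw [e] at this
    simpa using this
  -- step H: (a, a⁻¹ * b * a) → (b, a)
  have s8 : BraidEquiv (m ++ [a, a⁻¹ * b * a, a⁻¹, b⁻¹]) (m ++ [b, a, a⁻¹, b⁻¹]) := by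
    have := braidMove_single m [a⁻¹, b⁻¹] a (a⁻¹ * b * a)
    have e : a * (a⁻¹ * b * a) * a⁻¹ = b := by group
    rwa [e] at this
  -- assemble the target from the right-hand side
  have t1 : BraidEquiv (b :: a :: (m ++ [a⁻¹, b⁻¹])) (b :: (m ++ [a, a⁻¹, b⁻¹])) :=
    braidEquiv_cons (braid_push_one hmp a [a⁻¹, b⁻¹]) b
  have t2 : BraidEquiv (b :: (m ++ [a, a⁻¹, b⁻¹])) (m ++ [b, a, a⁻¹, b⁻¹]) :=
    braid_push_one hmp b [a, a⁻¹, b⁻¹]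
  exact braidEquiv_trans s1 (braidEquiv_trans s2 (braidEquiv_trans s3 (braidEquiv_trans s4
    (braidEquiv_trans s5 (braidEquiv_trans s6 (braidEquiv_trans s7 (braidEquiv_trans s8
      (braidEquiv_symm (braidEquiv_trans t1 t2)))))))))

lemma hmBracket_braidEquiv_of_perm {l l' : List G} (h : l.Perm l') :
    BraidEquiv (hmBracket l) (hmBracket l') := by
  induction h with
  | nil => exact braidEquiv_refl _
  | cons a _ ih =>
    rw [hmBracket_cons, hmBracket_cons]
    have := braidEquiv_append ih [a] [a⁻¹]
    simpa using this
  | swap x y l => exact hmBracket_swap y x l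
  | trans _ _ ih₁ ih₂ => exact braidEquiv_trans ih₁ ih₂

end Aux

/-- For any permutation `π` of `{1,…,u}`, the bracket tuple `[g_1,…,g_u]` is braid
equivalent to `[g_{π(1)},…,g_{π(u)}]`. -/
theorem hmBracket_perm_braidEquiv {G : Type*} [Group G] {u : ℕ}
    (g : Fin u → G) (π : Equiv.Perm (Fin u)) :
    BraidEquiv (hmBracket (List.ofFn g)) (hmBracket (List.ofFn (fun i => g (π i)))) := by
  apply hmBracket_braidEquiv_of_perm
  rw [List.ofFn_eq_map, List.ofFn_eq_map]
  have hperm : (List.finRange u).Perm ((List.finRange u).map π) := by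
    apply List.perm_of_nodup_nodup_toFinset_eq (List.nodup_finRange u)
      ((List.nodup_finRange u).map π.injective)
    ext i
    simp [List.mem_map]
    exact ⟨π.symm i, by simp⟩
  have := hperm.map g
  simpa [List.map_map, Function.comp_def] using this
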